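/- Losslessness of one speculative sampling step: let V be a finite type and let p, q : V → ℝ be probability mass functions on V with p ≠ q. Define for each x ∈ V the acceptance mass α(x) := min(p(x), q(x)), the rejection probability ρ := 1 − Σ_y α(y), and the normalized residual r(x) := max(0, p(x) − q(x)) / Σ_y max(0, p(y) − q(y)). Then for every x ∈ V, α(x) + ρ · r(x) = p(x); that is, the output distribution of speculative sampling (draft from q, accept with probability min(1, p(x)/q(x)), otherwise resample from r) is exactly p. -/
import Mathlib

/-- Losslessness of one speculative sampling step: for probability mass
functions `p ≠ q` on a finite `V`, with acceptance mass `α x = min (p x) (q x)`,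
rejection probability `ρ = 1 - ∑ y, α y` and normalized residual
`r x = max 0 (p x - q x) / ∑ y, max 0 (p y - q y)`, we have
`α x + ρ * r x = p x` for every `x`. -/
theorem speculative_sampling_lossless
    (V : Type*) [Fintype V] (p q : V → ℝ)
    (hp : ∀ x, 0 ≤ p x) (hq : ∀ x, 0 ≤ q x)
    (hps : ∑ x, p x = 1) (hqs : ∑ x, q x = 1)
    (hne : p ≠ q) :
    ∀ x : V,
      min (p x) (q x) +
        (1 - ∑ y, min (p y) (q y)) *
          (max 0 (p x - q x) / ∑ y, max 0 (p y - q y)) = p x := by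
  intro x
  have hmax : ∀ y : V, max 0 (p y - q y) = p y - min (p y) (q y) := by
    intro y
    rcases le_total (p y) (q y) with h | h
    · rw [min_eq_left h, max_eq_left (by linarith)]; ring
    · rw [min_eq_right h, max_eq_right (by linarith)]
  have hS : (∑ y, max 0 (p y - q y)) = 1 - ∑ y, min (p y) (q y) := by
    simp only [hmax, Finset.sum_sub_distrib, hps]
  have hSpos : 0 < ∑ y, max 0 (p y - q y) := by
    rcases (Finset.sum_nonneg (fun y _ => le_max_left 0 (p y - q y))).lt_or_eq with h | h
    · exact h
    · exfalso
      apply hne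
      have hz : ∀ y ∈ Finset.univ, max 0 (p y - q y) = 0 :=
        (Finset.sum_eq_zero_iff_of_nonneg (fun y _ => le_max_left 0 (p y - q y))).mp h.symm
      have hle : ∀ y : V, p y ≤ q y := by
        intro y
        have := hz y (Finset.mem_univ y)
        by_contra hlt
        push_neg at hlt
        have : max 0 (p y - q y) > 0 := lt_max_of_lt_right (by linarith)
        linarith
      funext y
      by_contra hxy
      have hlt : p y < q y := lt_of_le_of_ne (hle y) hxy
      have : ∑ z, p z < ∑ z, q z :=
        Finset.sum_lt_sum (fun z _ => hle z) ⟨y, Finset.mem_univ y, hlt⟩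
      linarith
  rw [← hS]
  have : (∑ y, max 0 (p y - q y)) * (max 0 (p x - q x) / ∑ y, max 0 (p y - q y))
      = max 0 (p x - q x) := by
    field_simp
  rw [this, hmax]
  ring
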